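/- Let γ ∈ ℝ, σ ≥ 0, and let ρ : ℝ → [0,∞) be a continuous integrable function with ∫_ℝ x²ρ(x)dx < ∞ such that the Fourier transform t ↦ ∫_ℝ e^{itx} x²ρ(x)dx is integrable over ℝ. Define φ(t) = exp(iγt − σ²t²/2 + ∫_ℝ (e^{itx} − 1)ρ(x)dx). Then for every x ≠ 0, ρ(x) = (1/(2πx²)) ∫_ℝ e^{−itx} ( ((φ′(t))² − φ″(t)φ(t)) / (φ(t))² − σ² ) dt. -/

import Mathlib

open MeasureTheory Complex Metric FourierTransform

private lemma expIt (x t : ℝ) : HasDerivAt (fun t : ℝ => Complex.exp (Complex.I * t * x))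
    (Complex.exp (Complex.I * t * x) * (Complex.I * x)) t := by
  have h : HasDerivAt (fun t : ℝ => Complex.I * t * x) (Complex.I * x) t := by
    simpa using (((hasDerivAt_id t).ofReal_comp).const_mul Complex.I).mul_const (x : ℂ)
  exact h.cexp

private lemma normExpIt (t x : ℝ) : ‖Complex.exp (Complex.I * t * x)‖ = 1 := by
  rw [show (Complex.I * t * x) = ((t*x : ℝ) : ℂ) * Complex.I by push_cast; ring]
  exact Complex.norm_exp_ofReal_mul_I _

private lemma mom1_int {ρ : ℝ → ℝ} (hρ_nonneg : ∀ x : ℝ, 0 ≤ ρ x) (hρ_cont : Continuous ρ)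
    (hρ_int : Integrable ρ) (hρ_mom2 : Integrable (fun x : ℝ => x ^ 2 * ρ x)) :
    Integrable (fun x : ℝ => |x| * ρ x) := by
  refine (hρ_int.add hρ_mom2).mono
    ((continuous_abs.mul hρ_cont).aestronglyMeasurable) (ae_of_all _ fun x => ?_)
  have h1 : |x| ≤ 1 + x ^ 2 := by nlinarith [abs_nonneg x, _root_.sq_abs x]
  have h2 : (0:ℝ) ≤ x ^ 2 * ρ x := mul_nonneg (sq_nonneg x) (hρ_nonneg x)
  rw [Real.norm_eq_abs, Real.norm_eq_abs,
    _root_.abs_of_nonneg (mul_nonneg (abs_nonneg x) (hρ_nonneg x))]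
  have : (ρ + fun x => x^2 * ρ x) x = ρ x + x^2 * ρ x := rfl
  rw [this, _root_.abs_of_nonneg (add_nonneg (hρ_nonneg x) h2)]
  nlinarith [hρ_nonneg x]

private lemma d1 {ρ : ℝ → ℝ} (hρ_nonneg : ∀ x : ℝ, 0 ≤ ρ x) (hρ_cont : Continuous ρ)
    (hρ_int : Integrable ρ) (hρ_mom2 : Integrable (fun x : ℝ => x ^ 2 * ρ x)) (t : ℝ) :
    HasDerivAt (fun t : ℝ => ∫ x : ℝ, (Complex.exp (Complex.I * t * x) - 1) * ρ x)
      (∫ x : ℝ, Complex.exp (Complex.I * t * x) * (Complex.I * x) * ρ x) t := by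
  have hc : ∀ s : ℝ, Continuous (fun x : ℝ => (Complex.exp (Complex.I * s * x) - 1) * (ρ x : ℂ)) := by
    intro s; fun_prop
  have hc' : Continuous (fun x : ℝ => Complex.exp (Complex.I * t * x) * (Complex.I * x) * (ρ x : ℂ)) := by
    fun_prop
  have := (hasDerivAt_integral_of_dominated_loc_of_deriv_le (μ := volume) (x₀ := t)
    (F := fun (t : ℝ) (x : ℝ) => (Complex.exp (Complex.I * t * x) - 1) * ρ x)
    (F' := fun (t : ℝ) (x : ℝ) => Complex.exp (Complex.I * t * x) * (Complex.I * x) * ρ x)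
    (bound := fun x => |x| * ρ x) (Metric.ball_mem_nhds t one_pos)
    (Filter.Eventually.of_forall fun s => (hc s).aestronglyMeasurable)
    ?_ hc'.aestronglyMeasurable
    (ae_of_all _ fun x s _ => ?_) (mom1_int hρ_nonneg hρ_cont hρ_int hρ_mom2)
    (ae_of_all _ fun x s _ => ((expIt x s).sub_const 1).mul_const _)).2
  · exact this
  · refine (hρ_int.const_mul 2).mono ((hc t).aestronglyMeasurable) (ae_of_all _ fun x => ?_)
    rw [norm_mul]
    have h2 : ‖Complex.exp (Complex.I * t * x) - 1‖ ≤ 2 := by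
      calc ‖Complex.exp (Complex.I * t * x) - 1‖ ≤ ‖Complex.exp (Complex.I * t * x)‖ + ‖(1:ℂ)‖ :=
        norm_sub_le _ _
      _ ≤ 2 := by rw [normExpIt]; norm_num
    calc ‖Complex.exp (Complex.I * t * x) - 1‖ * ‖(ρ x : ℂ)‖ ≤ 2 * ‖(ρ x : ℂ)‖ := by gcongr
      _ = ‖2 * ρ x‖ := by
          simp [Real.norm_eq_abs, abs_mul, Complex.norm_real,
            _root_.abs_of_nonneg (hρ_nonneg x)]
  · simp only [norm_mul, normExpIt, one_mul, Complex.norm_real, norm_I, Complex.norm_real]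
    simp [Real.norm_eq_abs, _root_.abs_of_nonneg (hρ_nonneg x)]

private lemma d2 {ρ : ℝ → ℝ} (hρ_nonneg : ∀ x : ℝ, 0 ≤ ρ x) (hρ_cont : Continuous ρ)
    (hρ_int : Integrable ρ) (hρ_mom2 : Integrable (fun x : ℝ => x ^ 2 * ρ x)) (t : ℝ) :
    HasDerivAt (fun t : ℝ => ∫ x : ℝ, Complex.exp (Complex.I * t * x) * (Complex.I * x) * ρ x)
      (∫ x : ℝ, Complex.exp (Complex.I * t * x) * (Complex.I * x) ^ 2 * ρ x) t := by
  have hc : ∀ s : ℝ,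
      Continuous (fun x : ℝ => Complex.exp (Complex.I * s * x) * (Complex.I * x) * (ρ x : ℂ)) := by
    intro s; fun_prop
  have hc' : Continuous
      (fun x : ℝ => Complex.exp (Complex.I * t * x) * (Complex.I * x) ^ 2 * (ρ x : ℂ)) := by
    fun_prop
  have := (hasDerivAt_integral_of_dominated_loc_of_deriv_le (μ := volume) (x₀ := t)
    (F := fun (t : ℝ) (x : ℝ) => Complex.exp (Complex.I * t * x) * (Complex.I * x) * ρ x)
    (F' := fun (t : ℝ) (x : ℝ) => Complex.exp (Complex.I * t * x) * (Complex.I * x) ^ 2 * ρ x)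
    (bound := fun x => x ^ 2 * ρ x) (Metric.ball_mem_nhds t one_pos)
    (Filter.Eventually.of_forall fun s => (hc s).aestronglyMeasurable)
    ?_ hc'.aestronglyMeasurable
    (ae_of_all _ fun x s _ => ?_) hρ_mom2
    (ae_of_all _ fun x s _ => ?_)).2
  · exact this
  · refine (mom1_int hρ_nonneg hρ_cont hρ_int hρ_mom2).mono ((hc t).aestronglyMeasurable)
      (ae_of_all _ fun x => ?_)
    simp only [norm_mul, normExpIt, one_mul, norm_I, Complex.norm_real]
    simp [Real.norm_eq_abs, _root_.abs_of_nonneg (hρ_nonneg x),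
      _root_.abs_of_nonneg (mul_nonneg (abs_nonneg x) (hρ_nonneg x))]
  · simp only [norm_mul, norm_pow, normExpIt, one_mul, norm_I, Complex.norm_real]
    simp [Real.norm_eq_abs, _root_.abs_of_nonneg (hρ_nonneg x), _root_.sq_abs]
  · have h := ((expIt x s).mul_const (Complex.I * x)).mul_const ((ρ x : ℂ))
    try simp only []
    rw [show Complex.exp (Complex.I * s * x) * (Complex.I * x) ^ 2 * (ρ x : ℂ)
      = Complex.exp (Complex.I * s * x) * (Complex.I * x) * (Complex.I * x) * (ρ x : ℂ) by ring]
    exact h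

/-- Inversion formula for the Lévy density: if `ρ` is a continuous, integrable,
nonnegative Lévy density with finite second moment whose (second-moment) Fourier transform
`t ↦ ∫ e^{itx} x²ρ(x) dx` is integrable, then for every `x ≠ 0`,
`ρ(x) = (1/(2πx²)) ∫ e^{−itx}(((φ′(t))² − φ″(t)φ(t))/(φ(t))² − σ²) dt`, where `φ` is the
characteristic function of the unit-time increment. -/
theorem stmt2 (γ σ : ℝ) (hσ : 0 ≤ σ) (ρ : ℝ → ℝ)
    (hρ_nonneg : ∀ x : ℝ, 0 ≤ ρ x)
    (hρ_cont : Continuous ρ)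
    (hρ_int : Integrable ρ)
    (hρ_mom2 : Integrable (fun x : ℝ => x ^ 2 * ρ x))
    (hFT_int : Integrable
      (fun t : ℝ => ∫ x : ℝ, Complex.exp (Complex.I * t * x) * x ^ 2 * ρ x))
    (φ : ℝ → ℂ)
    (hφ : ∀ t : ℝ, φ t = Complex.exp (Complex.I * γ * t - σ ^ 2 * t ^ 2 / 2
      + ∫ x : ℝ, (Complex.exp (Complex.I * t * x) - 1) * ρ x)) :
    ∀ x : ℝ, x ≠ 0 →
      (ρ x : ℂ) = (1 / (2 * Real.pi * x ^ 2)) *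
        ∫ t : ℝ, Complex.exp (-(Complex.I * t * x)) *
          (((deriv φ t) ^ 2 - deriv (deriv φ) t * φ t) / (φ t) ^ 2 - σ ^ 2) := by
  have d1 := d1 hρ_nonneg hρ_cont hρ_int hρ_mom2
  have d2 := d2 hρ_nonneg hρ_cont hρ_int hρ_mom2
  intro x hx
  set F : ℝ → ℂ := fun t : ℝ => ∫ y : ℝ, Complex.exp (Complex.I * t * y) * y ^ 2 * ρ y
    with hFdef
  set A : ℝ → ℂ := fun t : ℝ => Complex.I * γ - σ ^ 2 * t
    + ∫ y : ℝ, Complex.exp (Complex.I * t * y) * (Complex.I * y) * ρ y with hAdef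
  set B : ℝ → ℂ := fun t : ℝ => -(σ:ℂ) ^ 2
    + ∫ y : ℝ, Complex.exp (Complex.I * t * y) * (Complex.I * y) ^ 2 * ρ y with hBdef
  have hcoer : ∀ t : ℝ, HasDerivAt (fun t : ℝ => (t : ℂ)) 1 t :=
    fun t => (hasDerivAt_id t).ofReal_comp
  have hψ : ∀ t : ℝ, HasDerivAt (fun t : ℝ => Complex.I * γ * t - σ ^ 2 * t ^ 2 / 2
      + ∫ y : ℝ, (Complex.exp (Complex.I * t * y) - 1) * ρ y) (A t) t := by
    intro t
    have h1 : HasDerivAt (fun t : ℝ => Complex.I * (γ:ℂ) * t) (Complex.I * γ) t := by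
      simpa using (hcoer t).const_mul (Complex.I * (γ:ℂ))
    have h2 : HasDerivAt (fun t : ℝ => (σ:ℂ) ^ 2 * t ^ 2 / 2) ((σ:ℂ) ^ 2 * t) t := by
      have := (((hasDerivAt_pow 2 ((t : ℂ))).comp_ofReal).const_mul ((σ:ℂ) ^ 2)).div_const 2
      refine this.congr_deriv ?_
      push_cast
      ring
    exact (h1.sub h2).add (d1 t)
  have hφfun : φ = fun t : ℝ => Complex.exp (Complex.I * γ * t - σ ^ 2 * t ^ 2 / 2
      + ∫ y : ℝ, (Complex.exp (Complex.I * t * y) - 1) * ρ y) := funext hφ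
  have hφd : ∀ t : ℝ, HasDerivAt φ (φ t * A t) t := by
    intro t
    rw [hφfun]
    exact (hψ t).cexp
  have hdφ : deriv φ = fun t : ℝ => φ t * A t := funext fun t => (hφd t).deriv
  have hAd : ∀ t : ℝ, HasDerivAt A (B t) t := by
    intro t
    have h2 : HasDerivAt (fun t : ℝ => (σ:ℂ) ^ 2 * t) ((σ:ℂ) ^ 2) t := by
      simpa using (hcoer t).const_mul ((σ:ℂ) ^ 2)
    have := ((hasDerivAt_const t (Complex.I * (γ:ℂ))).sub h2).add (d2 t)
    rw [hAdef, hBdef]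
    refine this.congr_deriv ?_
    ring
  have hφdd : ∀ t : ℝ, deriv (deriv φ) t = φ t * A t * A t + φ t * B t := by
    intro t
    rw [hdφ]
    exact (HasDerivAt.mul (hφd t) (hAd t)).deriv
  have hφne : ∀ t : ℝ, φ t ≠ 0 := fun t => by rw [hφ t]; exact Complex.exp_ne_zero _
  have hIsq : ∀ t : ℝ, (∫ y : ℝ, Complex.exp (Complex.I * t * y) * (Complex.I * y) ^ 2 * ρ y)
      = - F t := by
    intro t
    rw [hFdef, ← integral_neg]
    congr 1
    funext y
    have h : (Complex.I * (y:ℂ)) ^ 2 = -(y:ℂ) ^ 2 := by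
      rw [mul_pow, Complex.I_sq]; ring
    rw [h]; ring
  have hkey : ∀ t : ℝ, ((deriv φ t) ^ 2 - deriv (deriv φ) t * φ t) / (φ t) ^ 2 - σ ^ 2 = F t := by
    intro t
    have hB : B t = -(σ:ℂ) ^ 2 + - F t := by rw [hBdef]; simp only [hIsq t]
    rw [hφdd t, hdφ]
    simp only []
    rw [hB]
    field_simp [hφne t]
    ring
  have hintg : (∫ t : ℝ, Complex.exp (-(Complex.I * t * x)) *
      (((deriv φ t) ^ 2 - deriv (deriv φ) t * φ t) / (φ t) ^ 2 - σ ^ 2))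
      = ∫ t : ℝ, Complex.exp (-(Complex.I * t * x)) * F t := by
    congr 1
    funext t
    rw [hkey t]
  rw [hintg]
  -- Fourier inversion part
  set g : ℝ → ℂ := fun y : ℝ => ((y ^ 2 * ρ y : ℝ) : ℂ) with hgdef
  have hg_int : Integrable g := hρ_mom2.ofReal
  have hg_cont : Continuous g := by fun_prop
  have hFg : ∀ ξ : ℝ, 𝓕 g ξ = F (-(2 * Real.pi * ξ)) := by
    intro ξ
    rw [Real.fourier_eq', hFdef]
    congr 1
    funext v
    rw [smul_eq_mul, RCLike.inner_apply, starRingEnd_apply, star_trivial, hgdef]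
    rw [show ((-2 * Real.pi * (ξ * v) : ℝ) : ℂ) * Complex.I
      = Complex.I * ((-(2 * Real.pi * ξ) : ℝ) : ℂ) * v by push_cast; ring]
    push_cast
    ring
  have hFg_int : Integrable (𝓕 g) := by
    have h2 : Integrable (fun ξ : ℝ => F ((-(2 * Real.pi)) * ξ)) :=
      hFT_int.comp_mul_left' (neg_ne_zero.mpr (by positivity))
    rw [show 𝓕 g = fun ξ : ℝ => F (-(2 * Real.pi * ξ)) from funext hFg]
    simpa [neg_mul] using h2
  have hinv : 𝓕⁻ (𝓕 g) x = g x := hg_int.fourierInv_fourier_eq hFg_int hg_cont.continuousAt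
  -- change of variables
  have hcv : 𝓕⁻ (𝓕 g) x
      = ∫ ξ : ℝ, (fun t : ℝ => Complex.exp (-(Complex.I * t * x)) * F t) ((-(2 * Real.pi)) * ξ) := by
    rw [Real.fourierInv_eq']
    congr 1
    funext ξ
    rw [hFg ξ, smul_eq_mul, RCLike.inner_apply, starRingEnd_apply, star_trivial]
    simp only []
    rw [show (-(2 * Real.pi * ξ)) = (-(2 * Real.pi)) * ξ by ring]
    congr 1
    push_cast
    ring
  have hscale := MeasureTheory.Measure.integral_comp_mul_left
    (fun t : ℝ => Complex.exp (-(Complex.I * t * x)) * F t) (-(2 * Real.pi))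
  have hπ : (0:ℝ) < 2 * Real.pi := by positivity
  have htotal : (∫ t : ℝ, Complex.exp (-(Complex.I * t * x)) * F t)
      = (2 * Real.pi : ℝ) • g x := by
    rw [← hinv, hcv]
    rw [hscale]
    rw [abs_inv, abs_neg, abs_of_pos hπ]
    rw [smul_smul]
    rw [mul_inv_cancel₀ hπ.ne', one_smul]
  rw [htotal, hgdef]
  simp only [real_smul]
  have hxc : (x:ℂ) ≠ 0 := Complex.ofReal_ne_zero.mpr hx
  have hπc : ((Real.pi : ℝ) : ℂ) ≠ 0 := Complex.ofReal_ne_zero.mpr Real.pi_ne_zero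
  push_cast
  field_simp
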